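/- Algebraic core of the non-simply-laced generalized pentagon relation (Proposition 3.2): let A be a unital associative ℂ-algebra, q ∈ ℂ invertible, and U, V, c, d ∈ A elements satisfying UV − VU = (q − q^{-1})·c, V·c = q^{-2}·c·V − q^{-1}(q² − q^{-2})·d (equivalently d = (q^{-1}cV − qVc)/(q² − q^{-2})), and V·d = q^{-4}·d·V. Then for every integer n ≥ 2, Vⁿ·U = U·Vⁿ − q(1 − q^{-2n})·c·V^{n−1} + q²(1 − q^{-2n})(1 − q^{2−2n})·d·V^{n−2}. -/

import Mathlib

/-- Algebraic core of the non-simply-laced generalized pentagon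
relation (Proposition 3.2): let `A` be a unital associative ℂ-algebra, `q ∈ ℂ`
invertible with `q² − q⁻² ≠ 0`, and `U, V, c, d ∈ A` elements satisfying
`UV − VU = (q − q⁻¹)·c`, `V·c = q⁻²·c·V − q⁻¹(q² − q⁻²)·d`
(equivalently `d = (q⁻¹cV − qVc)/(q² − q⁻²)`), and `V·d = q⁻⁴·d·V`.
Then for every integer `n ≥ 2`,
`Vⁿ·U = U·Vⁿ − q(1 − q^{−2n})·c·V^{n−1} + q²(1 − q^{−2n})(1 − q^{2−2n})·d·V^{n−2}`. -/
theorem generalized_pentagon_core_nsl (A : Type*) [Ring A] [Algebra ℂ A]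
    (q : ℂ) (hq : q ≠ 0) (hq2 : q ^ (2 : ℤ) - q ^ (-2 : ℤ) ≠ 0)
    (U V c d : A)
    (h1 : U * V - V * U = (q - q⁻¹) • c)
    (h2 : V * c = (q ^ (-2 : ℤ)) • (c * V) - (q⁻¹ * (q ^ (2 : ℤ) - q ^ (-2 : ℤ))) • d)
    (h3 : V * d = (q ^ (-4 : ℤ)) • (d * V)) :
    ∀ n : ℕ, 2 ≤ n →
      V ^ n * U = U * V ^ n - (q * (1 - q ^ (-(2 * (n : ℤ))))) • (c * V ^ (n - 1)) +
        (q ^ (2 : ℤ) * (1 - q ^ (-(2 * (n : ℤ)))) * (1 - q ^ ((2 : ℤ) - 2 * (n : ℤ)))) •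
          (d * V ^ (n - 2)) := by
  have hVU : V * U = U * V - (q - q⁻¹) • c := by rw [← h1]; abel
  have step : ∀ n : ℕ, 2 ≤ n → ∀ a b : ℂ,
      V ^ n * U = U * V ^ n - a • (c * V ^ (n - 1)) + b • (d * V ^ (n - 2)) →
      V ^ (n + 1) * U = U * V ^ (n + 1)
        - ((q - q⁻¹) + q ^ (-2 : ℤ) * a) • (c * V ^ n)
        + (a * (q⁻¹ * (q ^ (2 : ℤ) - q ^ (-2 : ℤ))) + q ^ (-4 : ℤ) * b) • (d * V ^ (n - 1)) := by
    intro n hn a b ih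
    have hv1 : V * V ^ (n - 1) = V ^ n := by
      rw [← pow_succ']; congr 1; omega
    have hv2 : V * V ^ (n - 2) = V ^ (n - 1) := by
      rw [← pow_succ']; congr 1; omega
    calc V ^ (n + 1) * U = V * (V ^ n * U) := by rw [pow_succ', mul_assoc]
      _ = V * (U * V ^ n) - a • (V * (c * V ^ (n - 1))) + b • (V * (d * V ^ (n - 2))) := by
          rw [ih, mul_add, mul_sub, mul_smul_comm, mul_smul_comm]
      _ = _ := by
          rw [← mul_assoc V U, ← mul_assoc V c, ← mul_assoc V d, hVU, h2, h3]
          simp only [sub_mul, smul_mul_assoc, mul_assoc, hv1, hv2, pow_succ']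
          match_scalars <;> ring
  intro n hn
  induction n, hn using Nat.le_induction with
  | base =>
      have hb : V ^ 2 * U = U * V * V - (q - q⁻¹) • (c * V)
          - (q - q⁻¹) • ((q ^ (-2 : ℤ)) • (c * V) - (q⁻¹ * (q ^ (2 : ℤ) - q ^ (-2 : ℤ))) • d) := by
        rw [sq, mul_assoc, hVU, mul_sub, mul_smul_comm, ← mul_assoc, hVU, h2, sub_mul,
          smul_mul_assoc]
      rw [hb]
      norm_num
      simp only [pow_succ, pow_zero, pow_one, one_mul, mul_one, mul_assoc]
      match_scalars <;> simp -failIfUnchanged only [zpow_neg, zpow_ofNat] <;> field_simp <;> ring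
  | succ n hn ih =>
      have h := step n hn _ _ ih
      have e1 : n + 1 - 1 = n := by omega
      have e2 : n + 1 - 2 = n - 1 := by omega
      rw [e1, e2, h]
      push_cast
      have r1 : q ^ (-(2 * ((n : ℤ) + 1))) = q ^ (-(2 * (n : ℤ))) * q ^ (-2 : ℤ) := by
        rw [← zpow_add₀ hq]; congr 1; ring
      have r2 : q ^ ((2 : ℤ) - 2 * ((n : ℤ) + 1)) = q ^ (-(2 * (n : ℤ))) := by congr 1; ring
      have r3 : q ^ ((2 : ℤ) - 2 * (n : ℤ)) = q ^ (-(2 * (n : ℤ))) * q ^ (2 : ℤ) := by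
        rw [← zpow_add₀ hq]; congr 1; ring
      rw [r1, r2, r3]
      generalize q ^ (-(2 * (n : ℤ))) = Z
      match_scalars <;> simp only [zpow_neg, zpow_ofNat] <;> field_simp <;> ring
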